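/- For all n ∈ ℕ, the abelian complexity of y satisfies: P¹_y(n) = 2·Δ₁₂(n) + 2 if n is odd; P¹_y(n) = (5/2)·Δ₁₂(n) + 5/2 if n is even and Δ₁₂(n) is odd; P¹_y(n) = (5/2)·Δ₁₂(n) + 4 if n and Δ₁₂(n) are even and m₁₂(n) is odd; P¹_y(n) = (5/2)·Δ₁₂(n) + 1 if n, Δ₁₂(n) and m₁₂(n) are all even. -/

import Mathlib

/-- The 2-kernel of a sequence `s : ℕ → ℤ`. -/
def kernel2 (s : ℕ → ℤ) : Set (ℕ → ℤ) :=
  {t | ∃ i j : ℕ, j < 2 ^ i ∧ t = fun n => s (2 ^ i * n + j)}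

/-- A sequence is 2-regular if the ℤ-module spanned by its 2-kernel is finitely generated. -/
def IsTwoRegular (s : ℕ → ℤ) : Prop :=
  (Submodule.span ℤ (kernel2 s)).FG

/-- A sequence is 2-automatic if its 2-kernel is finite. -/
def IsTwoAutomatic (s : ℕ → ℤ) : Prop :=
  (kernel2 s).Finite

/-- The period-doubling word, fixed point (starting with 0) of 0 ↦ 01, 1 ↦ 00:
its `n`-th letter is the parity of the 2-adic valuation of `n+1`. -/
def pd (n : ℕ) : ℕ := (n + 1).factorization 2 % 2

/-- The Thue–Morse word, fixed point (starting with 0) of 0 ↦ 01, 1 ↦ 10: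
its `n`-th letter is the parity of the binary digit sum of `n`. -/
def tm (n : ℕ) : ℕ := (Nat.digits 2 n).sum % 2

/-- The 2-block coding `x = block(p, 2)` of the period-doubling word. -/
def xw (n : ℕ) : ℕ := 2 * pd n + pd (n + 1)

/-- The 2-block coding `y = block(t, 2)` of the Thue–Morse word. -/
def yw (n : ℕ) : ℕ := 2 * tm n + tm (n + 1)

/-- The factor of an infinite word `w` of length `len` occurring at position `i`. -/
def factorAt (w : ℕ → ℕ) (i len : ℕ) : List ℕ :=
  (List.range len).map fun k => w (i + k)

/-- `u` is a factor of the infinite word `w`. -/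
def IsFactor (w : ℕ → ℕ) (u : List ℕ) : Prop :=
  ∃ i, u = factorAt w i u.length

/-- Maximal number of 0's in a factor of `x` of length `n`. -/
noncomputable def M0 (n : ℕ) : ℕ := sSup {k | ∃ i, (factorAt xw i n).count 0 = k}

/-- Minimal number of 0's in a factor of `x` of length `n`. -/
noncomputable def m0 (n : ℕ) : ℕ := sInf {k | ∃ i, (factorAt xw i n).count 0 = k}

noncomputable def D0 (n : ℕ) : ℕ := M0 n - m0 n

/-- Maximal number of 2's in a factor of `x` of length `n`. -/
noncomputable def M2c (n : ℕ) : ℕ := sSup {k | ∃ i, (factorAt xw i n).count 2 = k}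

/-- Minimal number of 2's in a factor of `x` of length `n`. -/
noncomputable def m2c (n : ℕ) : ℕ := sInf {k | ∃ i, (factorAt xw i n).count 2 = k}

/-- The max-jump function for `M0`. -/
noncomputable def JM0 : ℕ → ℕ
  | 0 => 0
  | n + 1 => if M0 n < M0 (n + 1) then 1 else 0

/-- The min-jump function for `m0`. -/
noncomputable def jm0 (n : ℕ) : ℕ := if m0 n < m0 (n + 1) then 1 else 0

/-- Maximal total number of 1's and 2's in a factor of `y` of length `n`. -/
noncomputable def M12 (n : ℕ) : ℕ :=
  sSup {k | ∃ i, (factorAt yw i n).count 1 + (factorAt yw i n).count 2 = k}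

/-- Minimal total number of 1's and 2's in a factor of `y` of length `n`. -/
noncomputable def m12 (n : ℕ) : ℕ :=
  sInf {k | ∃ i, (factorAt yw i n).count 1 + (factorAt yw i n).count 2 = k}

noncomputable def D12 (n : ℕ) : ℕ := M12 n - m12 n

/-- Maximal total number of 0's and 3's in a factor of `y` of length `n`. -/
noncomputable def M03 (n : ℕ) : ℕ :=
  sSup {k | ∃ i, (factorAt yw i n).count 0 + (factorAt yw i n).count 3 = k}

/-- Minimal total number of 0's and 3's in a factor of `y` of length `n`. -/
noncomputable def m03 (n : ℕ) : ℕ :=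
  sInf {k | ∃ i, (factorAt yw i n).count 0 + (factorAt yw i n).count 3 = k}

/-- The max-jump function for `M03`. -/
noncomputable def JM03 (n : ℕ) : ℕ := if M03 (n - 1) < M03 n then 1 else 0

/-- The min-jump function for `m03`. -/
noncomputable def jm03 (n : ℕ) : ℕ := if m03 n < m03 (n + 1) then 1 else 0

/-- Abelian complexity: the number of abelian equivalence classes (i.e. distinct
multisets of letters) of factors of `w` of length `n`. -/
noncomputable def abComplexity (w : ℕ → ℕ) (n : ℕ) : ℕ :=
  Set.ncard {m : Multiset ℕ | ∃ i, (↑(factorAt w i n) : Multiset ℕ) = m}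

/-- The number of occurrences of `v` as a factor of `u`. -/
def countFactor (u v : List ℕ) : ℕ :=
  ((List.range (u.length + 1 - v.length)).filter
    fun i => decide ((u.drop i).take v.length = v)).length

/-- 2-abelian complexity: the number of 2-abelian equivalence classes of factors of `w`
of length `n`, where two words are 2-abelian equivalent when every word of length at most 2
occurs equally often in both. -/
noncomputable def abel2Complexity (w : ℕ → ℕ) (n : ℕ) : ℕ :=
  Set.ncard {f : List ℕ → ℕ |
    ∃ i, f = fun v => if v.length ≤ 2 then countFactor (factorAt w i n) v else 0}

/-- The morphism φ : 0 ↦ 12, 1 ↦ 12, 2 ↦ 00. -/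
def phiL : ℕ → List ℕ
  | 0 => [1, 2]
  | 1 => [1, 2]
  | 2 => [0, 0]
  | _ => []

/-- The morphism τ : 0 ↦ 0, 1 ↦ 2, 2 ↦ 1. -/
def tauL : ℕ → ℕ
  | 1 => 2
  | 2 => 1
  | n => n


-- ====== auxiliary development ======
lemma tm_le_one (n : ℕ) : tm n ≤ 1 := Nat.lt_succ_iff.mp (Nat.mod_lt _ (by norm_num))
lemma pd_le_one (n : ℕ) : pd n ≤ 1 := Nat.lt_succ_iff.mp (Nat.mod_lt _ (by norm_num))

lemma tm_zero : tm 0 = 0 := by unfold tm; simp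

lemma tm_even (k : ℕ) : tm (2 * k) = tm k := by
  rcases Nat.eq_zero_or_pos k with h | h
  · simp [h]
  · unfold tm
    rw [Nat.digits_def' (by norm_num : 2 ≤ 2) (by omega)]
    simp [Nat.mul_div_cancel_left, Nat.mul_mod_right]

lemma tm_odd (k : ℕ) : tm (2 * k + 1) = 1 - tm k := by
  unfold tm
  rw [Nat.digits_def' (by norm_num : 2 ≤ 2) (by omega)]
  have h1 : (2 * k + 1) % 2 = 1 := by omega
  have h2 : (2 * k + 1) / 2 = k := by omega
  rw [h1, h2]
  simp [List.sum_cons]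
  omega

lemma pd_even (k : ℕ) : pd (2 * k) = 0 := by
  unfold pd
  have : ¬ (2 ∣ 2 * k + 1) := by omega
  rw [Nat.factorization_eq_zero_of_not_dvd this]

lemma pd_odd (k : ℕ) : pd (2 * k + 1) = 1 - pd k := by
  unfold pd
  have h : 2 * k + 1 + 1 = 2 * (k + 1) := by ring
  rw [h, Nat.factorization_mul (by norm_num) (by omega)]
  simp [Nat.Prime.factorization_self Nat.prime_two]
  omega

/-- alternation: tm changes at k iff pd k = 0 -/
lemma tm_alt : ∀ k : ℕ, (pd k = 0 ∧ tm (k + 1) = 1 - tm k) ∨ (pd k = 1 ∧ tm (k + 1) = tm k) := by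
  intro k
  induction k using Nat.strong_induction_on with
  | _ k ih =>
    rcases Nat.even_or_odd k with ⟨j, hj⟩ | ⟨j, hj⟩
    · subst hj
      left
      constructor
      · rw [show j + j = 2 * j by ring, pd_even]
      · rw [show j + j = 2 * j by ring, show 2 * j + 1 = 2 * j + 1 from rfl, tm_odd, tm_even]
    · subst hj
      have hj' : j < 2 * j + 1 := by omega
      rcases ih j hj' with ⟨h0, h1⟩ | ⟨h0, h1⟩
      · right
        constructor
        · rw [pd_odd, h0]
        · rw [show 2 * j + 1 + 1 = 2 * (j + 1) by ring, tm_even, tm_odd, h1]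
      · left
        constructor
        · rw [pd_odd, h0]
        · rw [show 2 * j + 1 + 1 = 2 * (j + 1) by ring, tm_even, tm_odd, h1]
          have := tm_le_one j
          omega

/-- prefix function g -/
def gf (K : ℕ) : ℤ := 3 * (∑ k ∈ Finset.range K, (1 - (pd k : ℤ))) - 2 * K

def Tt (K : ℕ) : ℤ := ∑ k ∈ Finset.range K, (tm k : ℤ)

lemma gf_zero : gf 0 = 0 := by simp [gf]

lemma gf_succ (K : ℕ) : gf (K + 1) = gf K + 1 - 3 * pd K := by
  simp [gf, Finset.sum_range_succ]
  push_cast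
  ring

lemma Tt_succ (K : ℕ) : Tt (K + 1) = Tt K + tm K := by
  simp [Tt, Finset.sum_range_succ]

lemma gf_even : ∀ K, gf (2 * K) = - gf K := by
  intro K
  induction K with
  | zero => simp [gf]
  | succ K ih =>
    have h1 : 2 * (K + 1) = (2 * K + 1) + 1 := by ring
    rw [h1, gf_succ, show (2*K+1) = 2*K+1 from rfl, gf_succ, pd_even, pd_odd, gf_succ, ih]
    have := pd_le_one K
    rcases Nat.le_one_iff_eq_zero_or_eq_one.mp this with h | h <;> rw [h] <;> push_cast <;> ring

lemma gf_odd (K : ℕ) : gf (2 * K + 1) = 1 - gf K := by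
  rw [gf_succ, gf_even, pd_even]
  push_cast; ring

lemma Tt_even : ∀ K, Tt (2 * K) = K := by
  intro K
  induction K with
  | zero => simp [Tt]
  | succ K ih =>
    have h1 : 2 * (K + 1) = (2 * K + 1) + 1 := by ring
    rw [h1, Tt_succ, Tt_succ, ih, tm_even, tm_odd]
    have := tm_le_one K
    push_cast [show (1 : ℕ) - tm K = 1 - tm K from rfl]
    omega

lemma Tt_odd (K : ℕ) : Tt (2 * K + 1) = K + tm K := by
  rw [Tt_succ, Tt_even, tm_even]

-- per element lemmas
lemma elt12 (k : ℕ) :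
    ((if yw k = 1 then (1:ℤ) else 0) + (if yw k = 2 then (1:ℤ) else 0)) = 1 - pd k := by
  have h1 := tm_le_one k
  have h2 := tm_le_one (k+1)
  rcases tm_alt k with ⟨h3, h4⟩ | ⟨h3, h4⟩ <;> rcases Nat.le_one_iff_eq_zero_or_eq_one.mp h1 with h5 | h5 <;>
    simp [yw, h3, h4, h5]

lemma elt21 (k : ℕ) :
    ((if yw k = 2 then (1:ℤ) else 0) - (if yw k = 1 then (1:ℤ) else 0)) = tm k - tm (k+1) := by
  have h1 := tm_le_one k
  rcases tm_alt k with ⟨h3, h4⟩ | ⟨h3, h4⟩ <;> rcases Nat.le_one_iff_eq_zero_or_eq_one.mp h1 with h5 | h5 <;>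
    simp [yw, h3, h4, h5]

lemma elt23 (k : ℕ) :
    ((if yw k = 2 then (1:ℤ) else 0) + (if yw k = 3 then (1:ℤ) else 0)) = tm k := by
  have h1 := tm_le_one k
  rcases tm_alt k with ⟨h3, h4⟩ | ⟨h3, h4⟩ <;> rcases Nat.le_one_iff_eq_zero_or_eq_one.mp h1 with h5 | h5 <;>
    simp [yw, h3, h4, h5]

lemma eltTot (k : ℕ) :
    ((if yw k = 0 then (1:ℤ) else 0) + (if yw k = 1 then (1:ℤ) else 0)
      + (if yw k = 2 then (1:ℤ) else 0) + (if yw k = 3 then (1:ℤ) else 0)) = 1 := by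
  have h1 := tm_le_one k
  rcases tm_alt k with ⟨h3, h4⟩ | ⟨h3, h4⟩ <;> rcases Nat.le_one_iff_eq_zero_or_eq_one.mp h1 with h5 | h5 <;>
    simp [yw, h3, h4, h5]

lemma factorAt_succ (w : ℕ → ℕ) (i n : ℕ) :
    factorAt w i (n + 1) = factorAt w i n ++ [w (i + n)] := by
  unfold factorAt
  rw [List.range_succ, List.map_append]
  rfl

lemma count_factor_succ (w : ℕ → ℕ) (i n a : ℕ) :
    (factorAt w i (n+1)).count a = (factorAt w i n).count a + (if w (i+n) = a then 1 else 0) := by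
  rw [factorAt_succ, List.count_append]
  congr 1
  rcases eq_or_ne (w (i+n)) a with h | h <;> simp [h, List.count_singleton']

lemma factorAt_length (w : ℕ → ℕ) (i n : ℕ) : (factorAt w i n).length = n := by
  simp [factorAt]

-- window lemmas
lemma win12 (i : ℕ) : ∀ n : ℕ, 3 * (((factorAt yw i n).count 1 : ℤ) + ((factorAt yw i n).count 2 : ℤ))
    = 2 * n + (gf (i + n) - gf i) := by
  intro n
  induction n with
  | zero => simp [factorAt]
  | succ n ih =>
    rw [count_factor_succ, count_factor_succ, show i + (n+1) = (i + n) + 1 by ring, gf_succ]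
    have h := elt12 (i + n)
    push_cast
    push_cast at ih
    split_ifs at h ⊢ <;> push_cast at h ⊢ <;> linarith

lemma win21 (i : ℕ) : ∀ n : ℕ, (((factorAt yw i n).count 2 : ℤ) - ((factorAt yw i n).count 1 : ℤ))
    = tm i - tm (i + n) := by
  intro n
  induction n with
  | zero => simp [factorAt]
  | succ n ih =>
    rw [count_factor_succ, count_factor_succ, show i + (n+1) = (i + n) + 1 by ring]
    have h := elt21 (i + n)
    push_cast
    push_cast at ih
    split_ifs at h ⊢ <;> push_cast at h ⊢ <;> linarith

lemma win23 (i : ℕ) : ∀ n : ℕ, (((factorAt yw i n).count 2 : ℤ) + ((factorAt yw i n).count 3 : ℤ))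
    = Tt (i + n) - Tt i := by
  intro n
  induction n with
  | zero => simp [factorAt]
  | succ n ih =>
    rw [count_factor_succ, count_factor_succ, show i + (n+1) = (i + n) + 1 by ring, Tt_succ]
    have h := elt23 (i + n)
    push_cast
    push_cast at ih
    split_ifs at h ⊢ <;> push_cast at h ⊢ <;> linarith

lemma winTot (i : ℕ) : ∀ n : ℕ, ((factorAt yw i n).count 0 + (factorAt yw i n).count 1
    + (factorAt yw i n).count 2 + (factorAt yw i n).count 3) = n := by
  intro n
  induction n with
  | zero => simp [factorAt]
  | succ n ih =>
    rw [count_factor_succ, count_factor_succ, count_factor_succ, count_factor_succ]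
    have h := eltTot (i + n)
    split_ifs at h ⊢ <;> push_cast at h <;> omega

lemma yw_le_three (k : ℕ) : yw k ≤ 3 := by
  have h1 := tm_le_one k
  have h2 := tm_le_one (k+1)
  unfold yw; omega

lemma count_factor_eq_zero (i n a : ℕ) (ha : 4 ≤ a) : (factorAt yw i n).count a = 0 := by
  rw [List.count_eq_zero]
  intro h
  unfold factorAt at *
  simp at h
  obtain ⟨k, _, hk⟩ := h
  have := yw_le_three (i + k)
  omega

@[ext] structure St where
  d : ℤ
  p : ℕ
  a : ℕ
  b : ℕ
deriving DecidableEq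
@[simp] lemma St_d (d : ℤ) (p a b : ℕ) : (St.mk d p a b).d = d := rfl
@[simp] lemma St_p (d : ℤ) (p a b : ℕ) : (St.mk d p a b).p = p := rfl
@[simp] lemma St_a (d : ℤ) (p a b : ℕ) : (St.mk d p a b).a = a := rfl
@[simp] lemma St_b (d : ℤ) (p a b : ℕ) : (St.mk d p a b).b = b := rfl

def rho (i n : ℕ) : St := ⟨gf (i + n) - gf i, i % 2, tm i, tm (i + n)⟩

lemma rho_ee (j k : ℕ) : rho (2*j) (2*k) = ⟨-(rho j k).d, 0, (rho j k).a, (rho j k).b⟩ := by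
  unfold rho
  have h : 2*j + 2*k = 2*(j+k) := by ring
  simp [h, gf_even, tm_even, Nat.mul_mod_right]
  ring

lemma rho_oe (j k : ℕ) : rho (2*j+1) (2*k) = ⟨-(rho j k).d, 1, 1 - (rho j k).a, 1 - (rho j k).b⟩ := by
  unfold rho
  have h : 2*j+1 + 2*k = 2*(j+k)+1 := by ring
  simp [h, gf_odd, tm_odd, Nat.add_mul_mod_self_left]

lemma rho_eo (j k : ℕ) : rho (2*j) (2*k+1) = ⟨1 - (rho j k).d, 0, (rho j k).a, 1 - (rho j k).b⟩ := by
  unfold rho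
  have h : 2*j + (2*k+1) = 2*(j+k)+1 := by ring
  simp [h, gf_odd, gf_even, tm_odd, tm_even, Nat.mul_mod_right]
  ring

lemma rho_oo (j k : ℕ) : rho (2*j+1) (2*k+1) = ⟨-1 - (rho j (k+1)).d, 1, 1 - (rho j (k+1)).a, (rho j (k+1)).b⟩ := by
  unfold rho
  have h : 2*j+1 + (2*k+1) = 2*(j+(k+1)) := by ring
  simp [h, gf_odd, gf_even, tm_odd, tm_even, Nat.add_mul_mod_self_left]
  omega

def MM : ℕ → ℤ × ℤ
  | 0 => (0, 0)
  | 1 => (-2, 1)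
  | n + 2 =>
    if (n + 2) % 2 = 0 then (-(MM ((n+2)/2)).2, -(MM ((n+2)/2)).1)
    else (min (1 - (MM ((n+1)/2)).2) (-1 - (MM ((n+3)/2)).2),
          max (1 - (MM ((n+1)/2)).1) (-1 - (MM ((n+3)/2)).1))
  decreasing_by all_goals omega

def mo (n : ℕ) : ℤ := (MM n).1
def Mo (n : ℕ) : ℤ := (MM n).2

lemma MM_zero : MM 0 = (0, 0) := by simp [MM]
lemma MM_one : MM 1 = (-2, 1) := by simp [MM]

lemma MM_even (k : ℕ) : MM (2*k) = (-(MM k).2, -(MM k).1) := by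
  match k with
  | 0 => norm_num [MM]
  | k + 1 =>
    rw [show 2*(k+1) = (2*k) + 2 by ring, MM]
    have h2 : (2*k+2) % 2 = 0 := by omega
    have h3 : (2*k+2) / 2 = k + 1 := by omega
    simp [h2, h3]

lemma MM_odd (k : ℕ) : MM (2*k+1) =
    (min (1 - (MM k).2) (-1 - (MM (k+1)).2), max (1 - (MM k).1) (-1 - (MM (k+1)).1)) := by
  match k with
  | 0 => norm_num [MM]
  | k + 1 =>
    rw [show 2*(k+1)+1 = (2*k+1) + 2 by ring, MM]
    have h2 : ¬ ((2*k+3) % 2 = 0) := by omega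
    have h3 : (2*k+2) / 2 = k + 1 := by omega
    have h4 : (2*k+4) / 2 = k + 2 := by omega
    simp only [h2, if_false]
    rw [show 2*k+1+1 = 2*k+2 from rfl, show 2*k+1+3 = 2*k+4 from rfl, h3, h4]

lemma mo_even (k : ℕ) : mo (2*k) = -(Mo k) := by unfold mo Mo; rw [MM_even]
lemma Mo_even (k : ℕ) : Mo (2*k) = -(mo k) := by unfold mo Mo; rw [MM_even]
lemma mo_odd (k : ℕ) : mo (2*k+1) = min (1 - Mo k) (-1 - Mo (k+1)) := by unfold mo Mo; rw [MM_odd]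
lemma Mo_odd (k : ℕ) : Mo (2*k+1) = max (1 - mo k) (-1 - mo (k+1)) := by unfold mo Mo; rw [MM_odd]

lemma mo_le_Mo : ∀ n, mo n ≤ Mo n := by
  intro n
  induction n using Nat.strong_induction_on with
  | _ n ih =>
    match n with
    | 0 => simp [mo, Mo, MM_zero]
    | 1 => norm_num [mo, Mo, MM_one]
    | n + 2 =>
      rcases Nat.even_or_odd (n+2) with ⟨k, hk⟩ | ⟨k, hk⟩
      · have hk' : n + 2 = 2*k := by omega
        rw [hk', mo_even, Mo_even]
        have := ih k (by omega)
        omega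
      · rw [hk, mo_odd, Mo_odd]
        have h1 := ih k (by omega)
        have : min (1 - Mo k) (-1 - Mo (k+1)) ≤ 1 - Mo k := min_le_left _ _
        have : 1 - mo k ≤ max (1 - mo k) (-1 - mo (k+1)) := le_max_left _ _
        omega

/-- consecutive-difference invariant -/
lemma MM_inv : ∀ n : ℕ,
    (mo (n+1) - mo n = -2 ∧ Mo (n+1) - Mo n = 1) ∨
    (mo (n+1) - mo n = 1 ∧ Mo (n+1) - Mo n = 1) ∨
    (mo (n+1) - mo n = 1 ∧ Mo (n+1) - Mo n = -2) := by
  intro n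
  induction n using Nat.strong_induction_on with
  | _ n ih =>
    match n with
    | 0 => left; norm_num [mo, Mo, MM_zero, MM_one]
    | n + 1 =>
      rcases Nat.even_or_odd (n+1) with ⟨k, hk⟩ | ⟨k, hk⟩
      · -- n+1 = 2k, k ≥ 1; pair (2k, 2k+1)
        have hk' : n + 1 = 2*k := by omega
        have hik := ih k (by omega)
        have e1 : mo (n+1) = -(Mo k) := by rw [hk', mo_even]
        have e2 : Mo (n+1) = -(mo k) := by rw [hk', Mo_even]
        have e3 : mo (n+1+1) = min (1 - Mo k) (-1 - Mo (k+1)) := by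
          rw [show n+1+1 = 2*k+1 by omega, mo_odd]
        have e4 : Mo (n+1+1) = max (1 - mo k) (-1 - mo (k+1)) := by
          rw [show n+1+1 = 2*k+1 by omega, Mo_odd]
        rw [e1, e2, e3, e4]
        rcases le_total (1 - Mo k) (-1 - Mo (k+1)) with h | h <;>
        rcases le_total (1 - mo k) (-1 - mo (k+1)) with h' | h' <;>
          simp [min_eq_left, min_eq_right, max_eq_left, max_eq_right, h, h'] <;> try omega
      · -- n+1 = 2k+1; pair (2k+1, 2k+2)
        have hik := ih k (by omega)
        have hk1 := mo_le_Mo k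
        have hk2 := mo_le_Mo (k+1)
        have e1 : mo (n+1) = min (1 - Mo k) (-1 - Mo (k+1)) := by rw [hk, mo_odd]
        have e2 : Mo (n+1) = max (1 - mo k) (-1 - mo (k+1)) := by rw [hk, Mo_odd]
        have e3 : mo (n+1+1) = -(Mo (k+1)) := by rw [show n+1+1 = 2*(k+1) by omega, mo_even]
        have e4 : Mo (n+1+1) = -(mo (k+1)) := by rw [show n+1+1 = 2*(k+1) by omega, Mo_even]
        rw [e1, e2, e3, e4]
        rcases le_total (1 - Mo k) (-1 - Mo (k+1)) with h | h <;>
        rcases le_total (1 - mo k) (-1 - mo (k+1)) with h' | h' <;>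
          simp [min_eq_left, min_eq_right, max_eq_left, max_eq_right, h, h'] <;> try omega

lemma MM_mod3 : ∀ n : ℕ, (3:ℤ) ∣ (mo n - n) ∧ (3:ℤ) ∣ (Mo n - n) := by
  intro n
  induction n using Nat.strong_induction_on with
  | _ n ih =>
    match n with
    | 0 => simp [mo, Mo, MM_zero]
    | 1 => norm_num [mo, Mo, MM_one]
    | n + 2 =>
      rcases Nat.even_or_odd (n+2) with ⟨k, hk⟩ | ⟨k, hk⟩
      · have hk' : n + 2 = 2*k := by omega
        have := ih k (by omega)
        rw [hk', mo_even, Mo_even]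
        push_cast
        omega
      · have h1 := ih k (by omega)
        have h2 := ih (k+1) (by omega)
        rw [hk, mo_odd, Mo_odd]
        push_cast
        push_cast at h1 h2
        rcases le_total (1 - Mo k) (-1 - Mo (k+1)) with h | h <;>
        rcases le_total (1 - mo k) (-1 - mo (k+1)) with h' | h' <;>
          simp [min_eq_left, min_eq_right, max_eq_left, max_eq_right, h, h'] <;> try omega

def lo (n p : ℕ) : ℤ := if n % 2 = 0 then -Mo (n/2) else if p = 0 then 1 - Mo (n/2) else -1 - Mo (n/2+1)
def hi (n p : ℕ) : ℤ := if n % 2 = 0 then -mo (n/2) else if p = 0 then 1 - mo (n/2) else -1 - mo (n/2+1)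

lemma lo_even (k p : ℕ) : lo (2*k) p = -Mo k := by
  unfold lo
  have h1 : (2*k) % 2 = 0 := by omega
  have h2 : (2*k) / 2 = k := by omega
  simp [h1, h2]
lemma hi_even (k p : ℕ) : hi (2*k) p = -mo k := by
  unfold hi
  have h1 : (2*k) % 2 = 0 := by omega
  have h2 : (2*k) / 2 = k := by omega
  simp [h1, h2]
lemma lo_odd0 (k : ℕ) : lo (2*k+1) 0 = 1 - Mo k := by
  unfold lo
  have h1 : ¬ ((2*k+1) % 2 = 0) := by omega
  have h2 : (2*k+1) / 2 = k := by omega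
  simp [h1, h2]
lemma hi_odd0 (k : ℕ) : hi (2*k+1) 0 = 1 - mo k := by
  unfold hi
  have h1 : ¬ ((2*k+1) % 2 = 0) := by omega
  have h2 : (2*k+1) / 2 = k := by omega
  simp [h1, h2]
lemma lo_odd1 (k : ℕ) : lo (2*k+1) 1 = -1 - Mo (k+1) := by
  unfold lo
  have h1 : ¬ ((2*k+1) % 2 = 0) := by omega
  have h2 : (2*k+1) / 2 = k := by omega
  simp [h1, h2]
lemma hi_odd1 (k : ℕ) : hi (2*k+1) 1 = -1 - mo (k+1) := by
  unfold hi
  have h1 : ¬ ((2*k+1) % 2 = 0) := by omega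
  have h2 : (2*k+1) / 2 = k := by omega
  simp [h1, h2]

def Desc (n : ℕ) (x : St) : Prop :=
  x.p ≤ 1 ∧ x.a ≤ 1 ∧ x.b ≤ 1 ∧ x.d % 2 = ((x.a : ℤ) + x.b) % 2 ∧ (3:ℤ) ∣ (x.d - n) ∧
  lo n x.p ≤ x.d ∧ x.d ≤ hi n x.p

lemma hull {n : ℕ} {x : St} (h : Desc n x) : mo n ≤ x.d ∧ x.d ≤ Mo n := by
  obtain ⟨h1, _, _, _, _, h6, h7⟩ := h
  rcases Nat.even_or_odd n with ⟨k, hk⟩ | ⟨k, hk⟩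
  · have hk' : n = 2*k := by omega
    subst hk'
    rw [lo_even] at h6
    rw [hi_even] at h7
    rw [mo_even, Mo_even]
    omega
  · subst hk
    rw [mo_odd, Mo_odd]
    have a1 := min_le_left (1 - Mo k) (-1 - Mo (k+1))
    have a2 := min_le_right (1 - Mo k) (-1 - Mo (k+1))
    have a3 := le_max_left (1 - mo k) (-1 - mo (k+1))
    have a4 := le_max_right (1 - mo k) (-1 - mo (k+1))
    rcases Nat.le_one_iff_eq_zero_or_eq_one.mp h1 with hp | hp
    · rw [hp, lo_odd0] at h6; rw [hp, hi_odd0] at h7; omega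
    · rw [hp, lo_odd1] at h6; rw [hp, hi_odd1] at h7; omega

lemma cover (n : ℕ) (δ : ℤ) (h1 : mo n ≤ δ) (h2 : δ ≤ Mo n) (h3 : (3:ℤ) ∣ (δ - n)) :
    ∃ p ≤ 1, lo n p ≤ δ ∧ δ ≤ hi n p := by
  rcases Nat.even_or_odd n with ⟨k, hk⟩ | ⟨k, hk⟩
  · have hk' : n = 2*k := by omega
    subst hk'
    refine ⟨0, by omega, ?_, ?_⟩
    · rw [lo_even, ← mo_even]; exact h1
    · rw [hi_even, ← Mo_even]; exact h2
  · subst hk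
    have e1 := mo_odd k
    have e2 := Mo_odd k
    have i1 := MM_inv k
    have i2 := mo_le_Mo k
    have i3 := mo_le_Mo (k+1)
    have m1 := (MM_mod3 k).1
    have m2 := (MM_mod3 k).2
    have m3 := (MM_mod3 (k+1)).1
    have m4 := (MM_mod3 (k+1)).2
    by_cases hc : 1 - Mo k ≤ δ ∧ δ ≤ 1 - mo k
    · exact ⟨0, by omega, by rw [lo_odd0]; exact hc.1, by rw [hi_odd0]; exact hc.2⟩
    · refine ⟨1, by omega, ?_, ?_⟩
      · rw [lo_odd1]
        rcases min_choice (1 - Mo k) (-1 - Mo (k+1)) with hm | hm <;>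
          rw [hm] at e1 <;> push_cast at * <;> omega
      · rw [hi_odd1]
        rcases max_choice (1 - mo k) (-1 - mo (k+1)) with hm | hm <;>
          rw [hm] at e2 <;> push_cast at * <;> omega


-- step lemmas
lemma stepEE {k j : ℕ} (h : Desc k (rho j k)) : Desc (2*k) (rho (2*j) (2*k)) := by
  have hh := hull h
  obtain ⟨h1, h2, h3, h4, h5, h6, h7⟩ := h
  rw [rho_ee]
  unfold Desc
  simp only [St_d, St_p, St_a, St_b]
  rw [lo_even, hi_even]
  refine ⟨by omega, h2, h3, by omega, by omega, by omega, by omega⟩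

lemma stepOE {k j : ℕ} (h : Desc k (rho j k)) : Desc (2*k) (rho (2*j+1) (2*k)) := by
  have hh := hull h
  obtain ⟨h1, h2, h3, h4, h5, h6, h7⟩ := h
  rw [rho_oe]
  unfold Desc
  simp only [St_d, St_p, St_a, St_b]
  rw [lo_even, hi_even]
  refine ⟨by omega, by omega, by omega, by omega, by omega, by omega, by omega⟩

lemma stepEO {k j : ℕ} (h : Desc k (rho j k)) : Desc (2*k+1) (rho (2*j) (2*k+1)) := by
  have hh := hull h
  obtain ⟨h1, h2, h3, h4, h5, h6, h7⟩ := h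
  rw [rho_eo]
  unfold Desc
  simp only [St_d, St_p, St_a, St_b]
  rw [lo_odd0, hi_odd0]
  refine ⟨by omega, by omega, by omega, by omega, by omega, by omega, by omega⟩

lemma stepOO {k j : ℕ} (h : Desc (k+1) (rho j (k+1))) : Desc (2*k+1) (rho (2*j+1) (2*k+1)) := by
  have hh := hull h
  obtain ⟨h1, h2, h3, h4, h5, h6, h7⟩ := h
  rw [rho_oo]
  unfold Desc
  simp only [St_d, St_p, St_a, St_b]
  rw [lo_odd1, hi_odd1]
  refine ⟨by omega, by omega, by omega, by omega, by omega, by omega, by omega⟩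

lemma desc_zero_zero : Desc 0 (rho 0 0) := by
  have hr : rho 0 0 = ⟨0, 0, 0, 0⟩ := by
    unfold rho
    simp [tm_zero]
  rw [hr]
  have e1 := lo_even 0 0
  have e2 := hi_even 0 0
  norm_num [mo, Mo, MM_zero] at e1 e2
  unfold Desc
  simp only [St_d, St_p, St_a, St_b]
  rw [e1, e2]
  norm_num

lemma subDesc : ∀ m n i : ℕ, n + i ≤ m → Desc n (rho i n) := by
  intro m
  induction m with
  | zero =>
    intro n i h
    have hn : n = 0 := by omega
    have hi : i = 0 := by omega
    subst hn; subst hi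
    exact desc_zero_zero
  | succ m ih =>
    intro n i h
    rcases Nat.even_or_odd n with ⟨k, hk⟩ | ⟨k, hk⟩ <;>
    rcases Nat.even_or_odd i with ⟨j, hj⟩ | ⟨j, hj⟩
    · rw [show n = 2*k by omega, show i = 2*j by omega]
      exact stepEE (ih k j (by omega))
    · rw [show n = 2*k by omega, show i = 2*j+1 by omega]
      exact stepOE (ih k j (by omega))
    · rw [hk, show i = 2*j by omega]
      exact stepEO (ih k j (by omega))
    · rw [hk, show i = 2*j+1 by omega]
      have hm : k + 1 + j ≤ m := by omega
      exact stepOO (ih (k+1) j hm)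

lemma descRho (n i : ℕ) : Desc n (rho i n) := subDesc (n + i) n i le_rfl


-- small values
lemma tm1 : tm 1 = 1 := by rw [show (1:ℕ) = 2*0+1 from rfl, tm_odd, tm_zero]
lemma tm2 : tm 2 = 1 := by rw [show (2:ℕ) = 2*1 from rfl, tm_even, tm1]
lemma tm3 : tm 3 = 0 := by rw [show (3:ℕ) = 2*1+1 from rfl, tm_odd, tm1]
lemma tm4 : tm 4 = 1 := by rw [show (4:ℕ) = 2*2 from rfl, tm_even, tm2]
lemma tm5 : tm 5 = 0 := by rw [show (5:ℕ) = 2*2+1 from rfl, tm_odd, tm2]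
lemma tm6 : tm 6 = 0 := by rw [show (6:ℕ) = 2*3 from rfl, tm_even, tm3]
lemma tm11 : tm 11 = 1 := by rw [show (11:ℕ) = 2*5+1 from rfl, tm_odd, tm5]
lemma tm12 : tm 12 = 0 := by rw [show (12:ℕ) = 2*6 from rfl, tm_even, tm6]
lemma gf1 : gf 1 = 1 := by rw [show (1:ℕ) = 2*0+1 from rfl, gf_odd, gf_zero]; ring
lemma gf2 : gf 2 = -1 := by rw [show (2:ℕ) = 2*1 from rfl, gf_even, gf1]
lemma gf3 : gf 3 = 0 := by rw [show (3:ℕ) = 2*1+1 from rfl, gf_odd, gf1]; ring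
lemma gf4 : gf 4 = 1 := by rw [show (4:ℕ) = 2*2 from rfl, gf_even, gf2]; ring
lemma gf5 : gf 5 = 2 := by rw [show (5:ℕ) = 2*2+1 from rfl, gf_odd, gf2]; ring
lemma gf6 : gf 6 = 0 := by rw [show (6:ℕ) = 2*3 from rfl, gf_even, gf3]; ring
lemma gf11 : gf 11 = -1 := by rw [show (11:ℕ) = 2*5+1 from rfl, gf_odd, gf5]; ring
lemma gf12 : gf 12 = 0 := by rw [show (12:ℕ) = 2*6 from rfl, gf_even, gf6]; ring

lemma rho00 : rho 0 0 = ⟨0, 0, 0, 0⟩ := by unfold rho; norm_num [tm_zero]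
lemma rho10 : rho 1 0 = ⟨0, 1, 1, 1⟩ := by unfold rho; norm_num [tm1]
lemma rho20 : rho 2 0 = ⟨0, 0, 1, 1⟩ := by unfold rho; norm_num [tm2]
lemma rho50 : rho 5 0 = ⟨0, 1, 0, 0⟩ := by unfold rho; norm_num [tm5]
lemma rho01 : rho 0 1 = ⟨1, 0, 0, 1⟩ := by unfold rho; norm_num [tm_zero, tm1, gf1, gf_zero]
lemma rho21 : rho 2 1 = ⟨1, 0, 1, 0⟩ := by unfold rho; norm_num [tm2, tm3, gf2, gf3]
lemma rho31 : rho 3 1 = ⟨1, 1, 0, 1⟩ := by unfold rho; norm_num [tm3, tm4, gf3, gf4]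
lemma rho11 : rho 1 1 = ⟨-2, 1, 1, 1⟩ := by unfold rho; norm_num [tm1, tm2, gf1, gf2]
lemma rho51 : rho 5 1 = ⟨-2, 1, 0, 0⟩ := by unfold rho; norm_num [tm5, tm6, gf5, gf6]
lemma rho111 : rho 11 1 = ⟨1, 1, 1, 0⟩ := by
  unfold rho
  apply St.ext <;> simp only [St_d, St_p, St_a, St_b]
  · rw [show (11+1:ℕ) = 12 from rfl, gf11, gf12]; ring
  · exact tm11
  · rw [show (11+1:ℕ) = 12 from rfl]; exact tm12

lemma attained : ∀ n x, Desc n x → ∃ i, rho i n = x := by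
  intro n
  induction n using Nat.strong_induction_on with
  | _ n ih =>
    match n with
    | 0 =>
      rintro ⟨d, p, a, b⟩ ⟨h1, h2, h3, h4, h5, h6, h7⟩
      simp only [St_d, St_p, St_a, St_b] at h1 h2 h3 h4 h5 h6 h7
      have e1 := lo_even 0 p
      have e2 := hi_even 0 p
      norm_num [mo, Mo, MM_zero] at e1 e2
      rw [e1] at h6; rw [e2] at h7
      have hd : d = 0 := by omega
      have hab : a = b := by omega
      subst hd; subst hab
      rcases Nat.le_one_iff_eq_zero_or_eq_one.mp h1 with hp | hp <;>
      rcases Nat.le_one_iff_eq_zero_or_eq_one.mp h2 with ha | ha <;> subst hp <;> subst ha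
      · exact ⟨0, rho00⟩
      · exact ⟨2, rho20⟩
      · exact ⟨5, rho50⟩
      · exact ⟨1, rho10⟩
    | 1 =>
      rintro ⟨d, p, a, b⟩ ⟨h1, h2, h3, h4, h5, h6, h7⟩
      simp only [St_d, St_p, St_a, St_b] at h1 h2 h3 h4 h5 h6 h7
      rcases Nat.le_one_iff_eq_zero_or_eq_one.mp h1 with hp | hp <;> subst hp
      · have e1 := lo_odd0 0
        have e2 := hi_odd0 0
        norm_num [mo, Mo, MM_zero] at e1 e2
        rw [e1] at h6; rw [e2] at h7
        have hd : d = 1 := by push_cast at h5; omega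
        subst hd
        have : (a = 0 ∧ b = 1) ∨ (a = 1 ∧ b = 0) := by omega
        rcases this with ⟨ha, hb⟩ | ⟨ha, hb⟩ <;> subst ha <;> subst hb
        · exact ⟨0, rho01⟩
        · exact ⟨2, rho21⟩
      · have e1 := lo_odd1 0
        have e2 := hi_odd1 0
        norm_num [mo, Mo, MM_one] at e1 e2
        rw [e1] at h6; rw [e2] at h7
        have hd : d = -2 ∨ d = 1 := by push_cast at h5; omega
        rcases hd with hd | hd <;> subst hd
        · have hab : a = b := by omega
          subst hab
          rcases Nat.le_one_iff_eq_zero_or_eq_one.mp h2 with ha | ha <;> subst ha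
          · exact ⟨5, rho51⟩
          · exact ⟨1, rho11⟩
        · have : (a = 0 ∧ b = 1) ∨ (a = 1 ∧ b = 0) := by omega
          rcases this with ⟨ha, hb⟩ | ⟨ha, hb⟩ <;> subst ha <;> subst hb
          · exact ⟨3, rho31⟩
          · exact ⟨11, rho111⟩
    | n + 2 =>
      rintro ⟨d, p, a, b⟩ ⟨h1, h2, h3, h4, h5, h6, h7⟩
      simp only [St_d, St_p, St_a, St_b] at h1 h2 h3 h4 h5 h6 h7
      rcases Nat.even_or_odd (n+2) with ⟨k, hk⟩ | ⟨k, hk⟩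
      · -- even: n+2 = 2k
        have hk' : n + 2 = 2*k := by omega
        rw [hk'] at h5 h6 h7 ⊢
        rw [lo_even] at h6
        rw [hi_even] at h7
        have h5' : (3:ℤ) ∣ (-d) - k := by push_cast at h5 ⊢; omega
        obtain ⟨p', hp', hl, hh'⟩ := cover k (-d) (by omega) (by omega) h5'
        rcases Nat.le_one_iff_eq_zero_or_eq_one.mp h1 with hp | hp <;> subst hp
        · have hy : Desc k ⟨-d, p', a, b⟩ := by
            refine ⟨hp', h2, h3, ?_, ?_, ?_, ?_⟩ <;> simp only [St_d, St_p, St_a, St_b]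
            · omega
            · exact h5'
            · exact hl
            · exact hh'
          obtain ⟨j, hj⟩ := ih k (by omega) _ hy
          refine ⟨2*j, ?_⟩
          rw [rho_ee, hj]
          apply St.ext <;> simp only [St_d, St_p, St_a, St_b] <;> omega
        · have hy : Desc k ⟨-d, p', 1-a, 1-b⟩ := by
            refine ⟨hp', by simp only [St_a]; omega, by simp only [St_b]; omega, ?_, ?_, ?_, ?_⟩ <;>
              simp only [St_d, St_p, St_a, St_b]
            · omega
            · exact h5'
            · exact hl
            · exact hh'
          obtain ⟨j, hj⟩ := ih k (by omega) _ hy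
          refine ⟨2*j+1, ?_⟩
          rw [rho_oe, hj]
          apply St.ext <;> simp only [St_d, St_p, St_a, St_b] <;> omega
      · -- odd: n+2 = 2k+1, k ≥ 1
        rw [hk] at h5 h6 h7 ⊢
        rcases Nat.le_one_iff_eq_zero_or_eq_one.mp h1 with hp | hp <;> subst hp
        · rw [lo_odd0] at h6
          rw [hi_odd0] at h7
          have h5' : (3:ℤ) ∣ (1-d) - k := by push_cast at h5 ⊢; omega
          obtain ⟨p', hp', hl, hh'⟩ := cover k (1-d) (by omega) (by omega) h5'
          have hy : Desc k ⟨1-d, p', a, 1-b⟩ := by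
            refine ⟨hp', h2, by simp only [St_b]; omega, ?_, ?_, ?_, ?_⟩ <;>
              simp only [St_d, St_p, St_a, St_b]
            · omega
            · exact h5'
            · exact hl
            · exact hh'
          obtain ⟨j, hj⟩ := ih k (by omega) _ hy
          refine ⟨2*j, ?_⟩
          rw [rho_eo, hj]
          apply St.ext <;> simp only [St_d, St_p, St_a, St_b] <;> omega
        · rw [lo_odd1] at h6
          rw [hi_odd1] at h7
          have h5' : (3:ℤ) ∣ (-1-d) - (k+1) := by push_cast at h5 ⊢; omega
          obtain ⟨p', hp', hl, hh'⟩ := cover (k+1) (-1-d) (by omega) (by omega) h5'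
          have hy : Desc (k+1) ⟨-1-d, p', 1-a, b⟩ := by
            refine ⟨hp', by simp only [St_a]; omega, h3, ?_, ?_, ?_, ?_⟩ <;>
              simp only [St_d, St_p, St_a, St_b]
            · omega
            · exact h5'
            · exact hl
            · exact hh'
          obtain ⟨j, hj⟩ := ih (k+1) (by omega) _ hy
          refine ⟨2*j+1, ?_⟩
          rw [rho_oo, hj]
          apply St.ext <;> simp only [St_d, St_p, St_a, St_b] <;> omega

-- the class map
def epsOf (q t : ℕ) : ℤ := if q = 1 then 1 - 2 * (t : ℤ) else 0
def eps (K : ℕ) : ℤ := epsOf (K % 2) (tm K)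
def clsF (n : ℕ) (x : St) : ℤ × ℤ × ℤ :=
  (x.d, (x.a : ℤ) - x.b, epsOf ((x.p + n) % 2) x.b - epsOf x.p x.a)

lemma two_Tt (K : ℕ) : 2 * Tt K = K + eps K := by
  rcases Nat.even_or_odd K with ⟨m, hm⟩ | ⟨m, hm⟩
  · have hm' : K = 2*m := by omega
    subst hm'
    rw [Tt_even]
    unfold eps epsOf
    have h0 : (2*m) % 2 = 0 := by omega
    simp [h0]
  · subst hm
    rw [Tt_odd]
    unfold eps epsOf
    have h1 : (2*m+1) % 2 = 1 := by omega
    rw [h1, tm_odd]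
    have := tm_le_one m
    simp
    push_cast [show (1:ℕ) - tm m = 1 - tm m from rfl]
    omega

def Phin (n : ℕ) (m : Multiset ℕ) : ℤ × ℤ × ℤ :=
  (3 * ((m.count 1 : ℤ) + (m.count 2 : ℤ)) - 2 * n,
   (m.count 2 : ℤ) - (m.count 1 : ℤ),
   2 * ((m.count 2 : ℤ) + (m.count 3 : ℤ)) - n)

lemma factf (n i : ℕ) : Phin n (↑(factorAt yw i n)) = clsF n (rho i n) := by
  unfold Phin clsF rho
  simp only [Multiset.coe_count, St_d, St_p, St_a, St_b]
  refine Prod.ext ?_ (Prod.ext ?_ ?_)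
  · simp only []
    have := win12 i n
    omega
  · simp only []
    exact win21 i n
  · simp only []
    have h1 := win23 i n
    have h2 := two_Tt (i+n)
    have h3 := two_Tt i
    have h4 : (i % 2 + n) % 2 = (i + n) % 2 := by omega
    rw [h4]
    have : eps (i+n) = epsOf ((i+n) % 2) (tm (i+n)) := rfl
    rw [← this]
    have : eps i = epsOf (i % 2) (tm i) := rfl
    rw [← this]
    push_cast
    omega

lemma phin_injOn (n : ℕ) :
    Set.InjOn (Phin n) {m : Multiset ℕ | ∃ i, (↑(factorAt yw i n) : Multiset ℕ) = m} := by
  rintro m1 ⟨i1, h1⟩ m2 ⟨i2, h2⟩ heq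
  subst h1; subst h2
  have t1 := winTot i1 n
  have t2 := winTot i2 n
  unfold Phin at heq
  simp only [Multiset.coe_count, Prod.mk.injEq] at heq
  obtain ⟨e1, e2, e3⟩ := heq
  have c1 : (factorAt yw i1 n).count 1 = (factorAt yw i2 n).count 1 := by omega
  have c2 : (factorAt yw i1 n).count 2 = (factorAt yw i2 n).count 2 := by omega
  have c3 : (factorAt yw i1 n).count 3 = (factorAt yw i2 n).count 3 := by omega
  have c0 : (factorAt yw i1 n).count 0 = (factorAt yw i2 n).count 0 := by omega
  have : ∀ q : ℕ, (factorAt yw i1 n).count q = (factorAt yw i2 n).count q := by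
    intro q
    match q with
    | 0 => exact c0
    | 1 => exact c1
    | 2 => exact c2
    | 3 => exact c3
    | q + 4 =>
      rw [count_factor_eq_zero i1 n _ (by omega), count_factor_eq_zero i2 n _ (by omega)]
  exact Multiset.coe_eq_coe.mpr (List.perm_iff_count.mpr this)

lemma abComplexity_eq_cls (n : ℕ) :
    abComplexity yw n = Set.ncard {p : ℤ × ℤ × ℤ | ∃ i, clsF n (rho i n) = p} := by
  unfold abComplexity
  rw [← Set.ncard_image_of_injOn (phin_injOn n)]
  congr 1
  ext p
  constructor
  · rintro ⟨m, ⟨i, hm⟩, hp⟩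
    exact ⟨i, by rw [← hp, ← hm, factf]⟩
  · rintro ⟨i, hp⟩
    exact ⟨↑(factorAt yw i n), ⟨i, rfl⟩, by rw [factf, hp]⟩

-- BEGIN F2
def vf (n : ℕ) (δ : ℤ) : Finset (ℤ × ℤ) :=
  if n % 2 = 1 then (if δ % 2 = 0 then {(0,1),(0,-1)} else {(1,1),(-1,-1)})
  else (if δ % 2 = 0 then {(0,0)} else {(1,0),(-1,0),(1,2),(-1,-2)})

noncomputable def Dn (n : ℕ) : ℕ := ((Mo n - mo n)/3).toNat

noncomputable def CFin (n : ℕ) : Finset (ℤ × ℤ × ℤ) :=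
  (Finset.range (Dn n + 1)).biUnion
    (fun ℓ => (vf n (mo n + 3*(ℓ:ℤ))).image (fun sv => (mo n + 3*(ℓ:ℤ), sv.1, sv.2)))

lemma mem_vf {n : ℕ} {x : St} (h1 : x.p ≤ 1) (h2 : x.a ≤ 1) (h3 : x.b ≤ 1)
    (h4 : x.d % 2 = ((x.a:ℤ) + x.b) % 2) :
    ((x.a : ℤ) - x.b, epsOf ((x.p + n) % 2) x.b - epsOf x.p x.a) ∈ vf n x.d := by
  obtain ⟨d, p, a, b⟩ := x
  simp only [St_d, St_p, St_a, St_b] at *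
  have hn : n % 2 = 0 ∨ n % 2 = 1 := by omega
  rcases hn with hn | hn <;>
    interval_cases p <;> interval_cases a <;> interval_cases b <;>
      simp_all [vf, epsOf, Nat.add_mod] <;> omega

lemma mk_cls (n : ℕ) (δ : ℤ) (p a b : ℕ) (q : ℕ) (hq : (p + n) % 2 = q) :
    clsF n ⟨δ, p, a, b⟩ = (δ, (a:ℤ) - b, epsOf q b - epsOf p a) := by
  unfold clsF
  simp only [St_d, St_p, St_a, St_b, hq]

lemma exists_desc (n : ℕ) (δ : ℤ) (hlo : mo n ≤ δ) (hhi : δ ≤ Mo n) (hdvd : (3:ℤ) ∣ δ - n)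
    (sv : ℤ × ℤ) (hsv : sv ∈ vf n δ) : ∃ x : St, Desc n x ∧ clsF n x = (δ, sv.1, sv.2) := by
  obtain ⟨sE, eE⟩ := sv
  simp only []
  have hδp : δ % 2 = 0 ∨ δ % 2 = 1 := by omega
  rcases Nat.even_or_odd n with ⟨k, hk⟩ | ⟨k, hk⟩
  · have hk' : n = 2*k := by omega
    have hn : n % 2 = 0 := by omega
    have hol : ∀ p, lo n p = mo n := fun p => by rw [hk', lo_even, mo_even]
    have hoh : ∀ p, hi n p = Mo n := fun p => by rw [hk', hi_even, Mo_even]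
    have hq0 : (0 + n) % 2 = 0 := by omega
    have hq1 : (1 + n) % 2 = 1 := by omega
    rcases hδp with hδ | hδ
    · simp [vf, hn, hδ] at hsv
      obtain ⟨h1, h2⟩ := hsv
      subst h1; subst h2
      refine ⟨⟨δ, 0, 0, 0⟩, ⟨by simp, by simp, by simp, by simp [hδ], by simpa using hdvd,
        by simpa [hol] using hlo, by simpa [hoh] using hhi⟩, ?_⟩
      rw [mk_cls n δ 0 0 0 0 hq0]
      unfold epsOf
      norm_num
    · simp [vf, hn, hδ] at hsv
      rcases hsv with ⟨h1, h2⟩ | ⟨h1, h2⟩ | ⟨h1, h2⟩ | ⟨h1, h2⟩ <;> subst h1 <;> subst h2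
      · refine ⟨⟨δ, 0, 1, 0⟩, ⟨by simp, by simp, by simp, by simp [hδ], by simpa using hdvd,
          by simpa [hol] using hlo, by simpa [hoh] using hhi⟩, ?_⟩
        rw [mk_cls n δ 0 1 0 0 hq0]
        unfold epsOf
        norm_num
      · refine ⟨⟨δ, 0, 0, 1⟩, ⟨by simp, by simp, by simp, by simp [hδ], by simpa using hdvd,
          by simpa [hol] using hlo, by simpa [hoh] using hhi⟩, ?_⟩
        rw [mk_cls n δ 0 0 1 0 hq0]
        unfold epsOf
        norm_num
      · refine ⟨⟨δ, 1, 1, 0⟩, ⟨by simp, by simp, by simp, by simp [hδ], by simpa using hdvd,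
          by simpa [hol] using hlo, by simpa [hoh] using hhi⟩, ?_⟩
        rw [mk_cls n δ 1 1 0 1 hq1]
        unfold epsOf
        norm_num
      · refine ⟨⟨δ, 1, 0, 1⟩, ⟨by simp, by simp, by simp, by simp [hδ], by simpa using hdvd,
          by simpa [hol] using hlo, by simpa [hoh] using hhi⟩, ?_⟩
        rw [mk_cls n δ 1 0 1 1 hq1]
        unfold epsOf
        norm_num
  · have hn : n % 2 = 1 := by omega
    obtain ⟨p', hp', hl, hh⟩ := cover n δ hlo hhi hdvd
    have hq0 : (0 + n) % 2 = 1 := by omega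
    have hq1 : (1 + n) % 2 = 0 := by omega
    rcases Nat.le_one_iff_eq_zero_or_eq_one.mp hp' with hp | hp <;> subst hp <;>
      rcases hδp with hδ | hδ <;> simp [vf, hn, hδ] at hsv
    · rcases hsv with ⟨h1, h2⟩ | ⟨h1, h2⟩ <;> subst h1 <;> subst h2
      · refine ⟨⟨δ, 0, 0, 0⟩, ⟨by simp, by simp, by simp, by simp [hδ], by simpa using hdvd,
          by simpa using hl, by simpa using hh⟩, ?_⟩
        rw [mk_cls n δ 0 0 0 1 hq0]
        unfold epsOf
        norm_num
      · refine ⟨⟨δ, 0, 1, 1⟩, ⟨by simp, by simp, by simp, by simp [hδ], by simpa using hdvd,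
          by simpa using hl, by simpa using hh⟩, ?_⟩
        rw [mk_cls n δ 0 1 1 1 hq0]
        unfold epsOf
        norm_num
    · rcases hsv with ⟨h1, h2⟩ | ⟨h1, h2⟩ <;> subst h1 <;> subst h2
      · refine ⟨⟨δ, 0, 1, 0⟩, ⟨by simp, by simp, by simp, by simp [hδ], by simpa using hdvd,
          by simpa using hl, by simpa using hh⟩, ?_⟩
        rw [mk_cls n δ 0 1 0 1 hq0]
        unfold epsOf
        norm_num
      · refine ⟨⟨δ, 0, 0, 1⟩, ⟨by simp, by simp, by simp, by simp [hδ], by simpa using hdvd,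
          by simpa using hl, by simpa using hh⟩, ?_⟩
        rw [mk_cls n δ 0 0 1 1 hq0]
        unfold epsOf
        norm_num
    · rcases hsv with ⟨h1, h2⟩ | ⟨h1, h2⟩ <;> subst h1 <;> subst h2
      · refine ⟨⟨δ, 1, 1, 1⟩, ⟨by simp, by simp, by simp, by simp [hδ], by simpa using hdvd,
          by simpa using hl, by simpa using hh⟩, ?_⟩
        rw [mk_cls n δ 1 1 1 0 hq1]
        unfold epsOf
        norm_num
      · refine ⟨⟨δ, 1, 0, 0⟩, ⟨by simp, by simp, by simp, by simp [hδ], by simpa using hdvd,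
          by simpa using hl, by simpa using hh⟩, ?_⟩
        rw [mk_cls n δ 1 0 0 0 hq1]
        unfold epsOf
        norm_num
    · rcases hsv with ⟨h1, h2⟩ | ⟨h1, h2⟩ <;> subst h1 <;> subst h2
      · refine ⟨⟨δ, 1, 1, 0⟩, ⟨by simp, by simp, by simp, by simp [hδ], by simpa using hdvd,
          by simpa using hl, by simpa using hh⟩, ?_⟩
        rw [mk_cls n δ 1 1 0 0 hq1]
        unfold epsOf
        norm_num
      · refine ⟨⟨δ, 1, 0, 1⟩, ⟨by simp, by simp, by simp, by simp [hδ], by simpa using hdvd,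
          by simpa using hl, by simpa using hh⟩, ?_⟩
        rw [mk_cls n δ 1 0 1 0 hq1]
        unfold epsOf
        norm_num

lemma setEq (n : ℕ) : {p : ℤ × ℤ × ℤ | ∃ i, clsF n (rho i n) = p} = ↑(CFin n) := by
  ext p
  simp only [Set.mem_setOf_eq, Finset.coe_sort_coe, Finset.mem_coe]
  constructor
  · rintro ⟨i, hp⟩
    have hD := descRho n i
    have hh := hull hD
    obtain ⟨h1, h2, h3, h4, h5, _, _⟩ := hD
    have hm3 := MM_mod3 n
    have hdm : (3:ℤ) ∣ ((rho i n).d - mo n) := by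
      obtain ⟨u, hu⟩ := h5
      obtain ⟨v, hv⟩ := hm3.1
      exact ⟨u - v, by linarith⟩
    have hDn3 : (3:ℤ) ∣ (Mo n - mo n) := by
      obtain ⟨u, hu⟩ := hm3.2
      obtain ⟨v, hv⟩ := hm3.1
      exact ⟨u - v, by linarith⟩
    have hmM := mo_le_Mo n
    set ℓ : ℕ := (((rho i n).d - mo n)/3).toNat with hℓ
    have hd : (rho i n).d = mo n + 3*(ℓ:ℤ) := by omega
    have hrange : ℓ < Dn n + 1 := by
      have : ((Mo n - mo n)/3).toNat = Dn n := rfl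
      omega
    rw [CFin, Finset.mem_biUnion]
    refine ⟨ℓ, Finset.mem_range.mpr hrange, ?_⟩
    rw [Finset.mem_image]
    refine ⟨(((rho i n).a : ℤ) - (rho i n).b,
      epsOf (((rho i n).p + n) % 2) (rho i n).b - epsOf (rho i n).p (rho i n).a), ?_, ?_⟩
    · rw [← hd]; exact mem_vf h1 h2 h3 h4
    · rw [← hd, ← hp]; rfl
  · intro hp
    rw [CFin, Finset.mem_biUnion] at hp
    obtain ⟨ℓ, hℓ, hp⟩ := hp
    rw [Finset.mem_image] at hp
    obtain ⟨sv, hsv, hpe⟩ := hp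
    have hm3 := MM_mod3 n
    have hDn3 : (3:ℤ) ∣ (Mo n - mo n) := by
      obtain ⟨u, hu⟩ := hm3.2
      obtain ⟨v, hv⟩ := hm3.1
      exact ⟨u - v, by linarith⟩
    rw [Finset.mem_range] at hℓ
    have hmM := mo_le_Mo n
    have hb1 : mo n ≤ mo n + 3*(ℓ:ℤ) := by omega
    have hb2 : mo n + 3*(ℓ:ℤ) ≤ Mo n := by
      have : ((Mo n - mo n)/3).toNat = Dn n := rfl
      omega
    have hdv : (3:ℤ) ∣ (mo n + 3*(ℓ:ℤ)) - n := by
      obtain ⟨v, hv⟩ := hm3.1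
      exact ⟨v + ℓ, by linarith⟩
    obtain ⟨x, hD, hc⟩ := exists_desc n (mo n + 3*(ℓ:ℤ)) hb1 hb2 hdv sv hsv
    obtain ⟨i, hi⟩ := attained n x hD
    exact ⟨i, by rw [hi, hc, ← hpe]⟩

-- F3 begins
lemma vf_card_odd {n : ℕ} (hn : n % 2 = 1) (δ : ℤ) : (vf n δ).card = 2 := by
  unfold vf
  rw [if_pos hn]
  split_ifs <;> decide

lemma vf_card_even0 {n : ℕ} (hn : n % 2 = 0) {δ : ℤ} (hδ : δ % 2 = 0) : (vf n δ).card = 1 := by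
  unfold vf
  rw [if_neg (by omega), if_pos hδ]
  decide

lemma vf_card_even1 {n : ℕ} (hn : n % 2 = 0) {δ : ℤ} (hδ : δ % 2 = 1) : (vf n δ).card = 4 := by
  unfold vf
  rw [if_neg (by omega), if_neg (by omega)]
  decide

lemma CFin_card (n : ℕ) :
    (CFin n).card = ∑ ℓ ∈ Finset.range (Dn n + 1), (vf n (mo n + 3*(ℓ:ℤ))).card := by
  unfold CFin
  rw [Finset.card_biUnion]
  · refine Finset.sum_congr rfl fun ℓ _ => ?_
    apply Finset.card_image_of_injective
    intro x y hxy
    simp only [Prod.mk.injEq] at hxy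
    exact Prod.ext hxy.2.1 hxy.2.2
  · intro ℓ1 _ ℓ2 _ hne
    simp only [Function.onFun]
    rw [Finset.disjoint_left]
    intro p hp1 hp2
    rw [Finset.mem_image] at hp1 hp2
    obtain ⟨s1, _, he1⟩ := hp1
    obtain ⟨s2, _, he2⟩ := hp2
    rw [← he2] at he1
    rw [Prod.ext_iff] at he1
    have := he1.1
    simp only [] at this
    apply hne
    omega

lemma CFin_card_odd {n : ℕ} (hn : n % 2 = 1) : (CFin n).card = 2 * (Dn n + 1) := by
  rw [CFin_card]
  simp only [vf_card_odd hn]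
  rw [Finset.sum_const, Finset.card_range]
  ring

lemma altsum : ∀ (c : ℕ), ∀ K : ℕ,
    (c % 2 = 0 → 2 * (∑ ℓ ∈ Finset.range K, if (c + ℓ) % 2 = 0 then 1 else 4) + 3*(K%2) = 5*K) ∧
    (c % 2 = 1 → 2 * (∑ ℓ ∈ Finset.range K, if (c + ℓ) % 2 = 0 then 1 else 4) = 5*K + 3*(K%2)) := by
  intro c K
  induction K with
  | zero => simp
  | succ K ih =>
    rw [Finset.sum_range_succ]
    by_cases h : (c + K) % 2 = 0
    · rw [if_pos h]
      constructor <;> intro hc <;> [obtain ⟨h1, _⟩ := ih; obtain ⟨_, h1⟩ := ih] <;> omega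
    · rw [if_neg h]
      constructor <;> intro hc <;> [obtain ⟨h1, _⟩ := ih; obtain ⟨_, h1⟩ := ih] <;> omega

lemma CFin_card_even {n : ℕ} (hn : n % 2 = 0) :
    (mo n % 2 = 0 → 2 * (CFin n).card + 3*((Dn n + 1)%2) = 5*(Dn n + 1)) ∧
    (mo n % 2 = 1 → 2 * (CFin n).card = 5*(Dn n + 1) + 3*((Dn n + 1)%2)) := by
  have hmo : mo n % 2 = 0 ∨ mo n % 2 = 1 := by omega
  have key : ∀ c : ℕ, (mo n % 2 = c) → (CFin n).card
      = ∑ ℓ ∈ Finset.range (Dn n + 1), if (c + ℓ) % 2 = 0 then 1 else 4 := by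
    intro c hc
    rw [CFin_card]
    refine Finset.sum_congr rfl fun ℓ _ => ?_
    by_cases h : (c + ℓ) % 2 = 0
    · rw [if_pos h]
      exact vf_card_even0 hn (by omega)
    · rw [if_neg h]
      exact vf_card_even1 hn (by omega)
  constructor <;> intro hc
  · rw [key 0 hc]
    exact (altsum 0 (Dn n + 1)).1 rfl
  · rw [key 1 hc]
    exact (altsum 1 (Dn n + 1)).2 rfl

lemma exists_d (n : ℕ) (δ : ℤ) (hlo : mo n ≤ δ) (hhi : δ ≤ Mo n) (hdvd : (3:ℤ) ∣ δ - n) :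
    ∃ i, gf (i + n) - gf i = δ := by
  obtain ⟨p', hp', hl, hh⟩ := cover n δ hlo hhi hdvd
  have hδp : δ % 2 = 0 ∨ δ % 2 = 1 := by omega
  rcases hδp with hδ | hδ
  · obtain ⟨i, hi⟩ := attained n ⟨δ, p', 0, 0⟩
      ⟨hp', by simp, by simp, by simp [hδ], by simpa using hdvd, by simpa using hl, by simpa using hh⟩
    exact ⟨i, by have := congrArg St.d hi; simpa [rho] using this⟩
  · obtain ⟨i, hi⟩ := attained n ⟨δ, p', 1, 0⟩
      ⟨hp', by simp, by simp, by simp [hδ], by simpa using hdvd, by simpa using hl, by simpa using hh⟩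
    exact ⟨i, by have := congrArg St.d hi; simpa [rho] using this⟩

lemma rho_d (i n : ℕ) : (rho i n).d = gf (i + n) - gf i := rfl

lemma M12_eq (n : ℕ) : 3 * (M12 n : ℤ) = 2 * n + Mo n := by
  obtain ⟨i0, hi0⟩ := exists_d n (Mo n) (mo_le_Mo n) le_rfl (MM_mod3 n).2
  set T := {k | ∃ i, (factorAt yw i n).count 1 + (factorAt yw i n).count 2 = k} with hT
  have hub : ∀ k ∈ T, k ≤ (factorAt yw i0 n).count 1 + (factorAt yw i0 n).count 2 := by
    rintro k ⟨i, hik⟩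
    have h1 := win12 i n
    have h2 := win12 i0 n
    have h3 := (hull (descRho n i)).2
    rw [rho_d] at h3
    omega
  have hmem : ((factorAt yw i0 n).count 1 + (factorAt yw i0 n).count 2) ∈ T := ⟨i0, rfl⟩
  have hM : M12 n = (factorAt yw i0 n).count 1 + (factorAt yw i0 n).count 2 := by
    unfold M12
    rw [← hT]
    exact le_antisymm (csSup_le ⟨_, hmem⟩ hub) (le_csSup ⟨_, hub⟩ hmem)
  rw [hM]
  have h2 := win12 i0 n
  omega

lemma m12_eq (n : ℕ) : 3 * (m12 n : ℤ) = 2 * n + mo n := by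
  obtain ⟨i0, hi0⟩ := exists_d n (mo n) le_rfl (mo_le_Mo n) (MM_mod3 n).1
  set T := {k | ∃ i, (factorAt yw i n).count 1 + (factorAt yw i n).count 2 = k} with hT
  have hlb : ∀ k ∈ T, (factorAt yw i0 n).count 1 + (factorAt yw i0 n).count 2 ≤ k := by
    rintro k ⟨i, hik⟩
    have h1 := win12 i n
    have h2 := win12 i0 n
    have h3 := (hull (descRho n i)).1
    rw [rho_d] at h3
    omega
  have hmem : ((factorAt yw i0 n).count 1 + (factorAt yw i0 n).count 2) ∈ T := ⟨i0, rfl⟩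
  have hM : m12 n = (factorAt yw i0 n).count 1 + (factorAt yw i0 n).count 2 := by
    unfold m12
    rw [← hT]
    exact le_antisymm (Nat.sInf_le hmem) (le_csInf ⟨_, hmem⟩ hlb)
  rw [hM]
  have h2 := win12 i0 n
  omega

theorem stmt16 (n : ℕ) :
    (Odd n → abComplexity yw n = 2 * D12 n + 2) ∧
    (Even n → Odd (D12 n) → 2 * abComplexity yw n = 5 * D12 n + 5) ∧
    (Even n → Even (D12 n) → Odd (m12 n) → 2 * abComplexity yw n = 5 * D12 n + 8) ∧
    (Even n → Even (D12 n) → Even (m12 n) → 2 * abComplexity yw n = 5 * D12 n + 2) := by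
  have hC : abComplexity yw n = (CFin n).card := by
    rw [abComplexity_eq_cls, setEq, Set.ncard_coe_finset]
  have hM := M12_eq n
  have hm := m12_eq n
  have hmM := mo_le_Mo n
  have h3m := (MM_mod3 n).1
  have h3M := (MM_mod3 n).2
  have hDn : (Dn n : ℤ) * 3 = Mo n - mo n := by unfold Dn; omega
  have hD12 : D12 n = M12 n - m12 n := rfl
  refine ⟨?_, ?_, ?_, ?_⟩
  · intro hodd
    have hn : n % 2 = 1 := Nat.odd_iff.mp hodd
    have hcard := CFin_card_odd hn
    omega
  · intro heven hoddD
    have hn : n % 2 = 0 := Nat.even_iff.mp heven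
    have hD : D12 n % 2 = 1 := Nat.odd_iff.mp hoddD
    have hce := CFin_card_even hn
    rcases (by omega : mo n % 2 = 0 ∨ mo n % 2 = 1) with h | h
    · have := hce.1 h; omega
    · have := hce.2 h; omega
  · intro heven hevenD hoddm
    have hn : n % 2 = 0 := Nat.even_iff.mp heven
    have hD : D12 n % 2 = 0 := Nat.even_iff.mp hevenD
    have hmo : m12 n % 2 = 1 := Nat.odd_iff.mp hoddm
    have hce := CFin_card_even hn
    rcases (by omega : mo n % 2 = 0 ∨ mo n % 2 = 1) with h | h
    · have := hce.1 h; omega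
    · have := hce.2 h; omega
  · intro heven hevenD hevenm
    have hn : n % 2 = 0 := Nat.even_iff.mp heven
    have hD : D12 n % 2 = 0 := Nat.even_iff.mp hevenD
    have hmo : m12 n % 2 = 0 := Nat.even_iff.mp hevenm
    have hce := CFin_card_even hn
    rcases (by omega : mo n % 2 = 0 ∨ mo n % 2 = 1) with h | h
    · have := hce.1 h; omega
    · have := hce.2 h; omega
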